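/- For every integer n ≥ 2, every separation parameter s > 0, and every real number r > 0, there exist an axes-aligned square L ⊆ ℝ² and integrable density functions f₁,…,f_n : ℝ² → [0,∞) vanishing outside L such that MMS_i^{n,s} > 0 for every i ∈ {1,…,n}, yet there is no family A₁,…,A_n of axes-aligned rectangles contained in L that is pairwise s-separated and satisfies v_i(A_i) ≥ r · MMS_i^{n,s} for every i ∈ {1,…,n}. -/

import Mathlib

open MeasureTheory

noncomputable section

/-- A point of the plane. -/
abbrev Pt := ℝ × ℝ

/-- The ℓ∞ distance between two points of the plane. -/
def linfDist (p q : Pt) : ℝ := max |p.1 - q.1| |p.2 - q.2|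

/-- Two pieces of land are `s`-separated: every pair of points, one from each piece,
is at ℓ∞ distance at least `s`. -/
def SepSets (s : ℝ) (A B : Set Pt) : Prop := ∀ p ∈ A, ∀ q ∈ B, s ≤ linfDist p q

/-- An axes-aligned rectangle `[a,b] × [c,d]` with `a < b` and `c < d`. -/
structure Rect where
  a : ℝ
  b : ℝ
  c : ℝ
  d : ℝ
  hab : a < b
  hcd : c < d

/-- The set of points of a rectangle. -/
def Rect.set (R : Rect) : Set Pt := Set.Icc R.a R.b ×ˢ Set.Icc R.c R.d

/-- The length of the shorter side of a rectangle. -/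
def Rect.short (R : Rect) : ℝ := min (R.b - R.a) (R.d - R.c)

/-- The length of the longer side of a rectangle. -/
def Rect.long (R : Rect) : ℝ := max (R.b - R.a) (R.d - R.c)

/-- A rectangle is `r`-fat if its longer side is at most `r` times its shorter side. -/
def Rect.Fat (r : ℝ) (R : Rect) : Prop := R.long ≤ r * R.short

/-- The value of a piece `Z` under the density `f`. -/
def val (f : Pt → ℝ) (Z : Set Pt) : ℝ := ∫ p in Z, f p

/-- The 1-out-of-`k` maximin share of an agent with density `f` on land `L`
with separation parameter `s`: the supremum over families of `k` axes-aligned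
rectangles inside `L`, pairwise intersecting in zero measure and pairwise
`s`-separated, of the minimum value of a rectangle. -/
def MMS (f : Pt → ℝ) (L : Set Pt) (s : ℝ) (k : ℕ) : ℝ :=
  sSup {t : ℝ | ∃ P : Fin k → Rect,
    (∀ j, (P j).set ⊆ L) ∧
    (∀ i j, i ≠ j → volume ((P i).set ∩ (P j).set) = 0) ∧
    (∀ i j, i ≠ j → SepSets s ((P i).set) ((P j).set)) ∧
    (∀ j, t ≤ val f ((P j).set))}

/-- A valuation given by density `f` is `s`-normalized: there are finitely many
pairwise `s`-separated axes-aligned rectangles, each of value at most 1,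
such that `f` vanishes outside their union. -/
def SNormalized (s : ℝ) (f : Pt → ℝ) : Prop :=
  ∃ (N : ℕ) (Q : Fin N → Rect),
    (∀ i j, i ≠ j → SepSets s ((Q i).set) ((Q j).set)) ∧
    (∀ i, val f ((Q i).set) ≤ 1) ∧
    (∀ p, p ∉ ⋃ i, (Q i).set → f p = 0)

/-- The unit square `[0,1] × [0,1]`. -/
def unitSquare : Set Pt := Set.Icc (0 : ℝ) 1 ×ˢ Set.Icc (0 : ℝ) 1

/-- `Guillotine s a0 a1 b0 b1 P`: the family `P` of rectangles forms an
`s`-separated guillotine partition of `[a0,a1] × [b0,b1]`. -/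
inductive Guillotine (s : ℝ) : ℝ → ℝ → ℝ → ℝ → List Rect → Prop
  | single (a0 a1 b0 b1 : ℝ) (P : Rect)
      (h : P.set ⊆ Set.Icc a0 a1 ×ˢ Set.Icc b0 b1) :
      Guillotine s a0 a1 b0 b1 [P]
  | vert (a0 a1 b0 b1 a : ℝ) (h1 : a0 < a) (h2 : a < a1 - s)
      (P1 P2 : List Rect)
      (g1 : Guillotine s a0 a b0 b1 P1)
      (g2 : Guillotine s (a + s) a1 b0 b1 P2) :
      Guillotine s a0 a1 b0 b1 (P1 ++ P2)
  | horiz (a0 a1 b0 b1 b : ℝ) (h1 : b0 < b) (h2 : b < b1 - s)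
      (P1 P2 : List Rect)
      (g1 : Guillotine s a0 a1 b0 b P1)
      (g2 : Guillotine s a0 a1 (b + s) b1 P2) :
      Guillotine s a0 a1 b0 b1 (P1 ++ P2)


namespace IP

/-- A tiny square spot of half-side `s/16` centered at `z`. -/
def spotR (s : ℝ) (hs : 0 < s) (z : Pt) : Rect :=
  ⟨z.1 - s/16, z.1 + s/16, z.2 - s/16, z.2 + s/16, by linarith, by linarith⟩

lemma mem_spotR {s : ℝ} (hs : 0 < s) {z p : Pt} :
    p ∈ (spotR s hs z).set ↔ |p.1 - z.1| ≤ s/16 ∧ |p.2 - z.2| ≤ s/16 := by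
  simp only [spotR, Rect.set, Set.mem_prod, Set.mem_Icc, abs_le]
  constructor
  · rintro ⟨⟨h1, h2⟩, h3, h4⟩
    exact ⟨⟨by linarith, by linarith⟩, ⟨by linarith, by linarith⟩⟩
  · rintro ⟨⟨h1, h2⟩, h3, h4⟩
    exact ⟨⟨by linarith, by linarith⟩, ⟨by linarith, by linarith⟩⟩

lemma tri3 (a b c d : ℝ) : |a - d| ≤ |a - b| + |b - c| + |c - d| := by
  have h1 : a - d = (a - b) + (b - c) + (c - d) := by ring
  calc |a - d| = |(a - b) + (b - c) + (c - d)| := by rw [h1]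
    _ ≤ |(a - b) + (b - c)| + |c - d| := abs_add_le _ _
    _ ≤ |a - b| + |b - c| + |c - d| := by linarith [abs_add_le (a - b) (b - c)]

lemma nat_dist (a b : ℕ) (h : a ≠ b) : (1 : ℝ) ≤ |(a : ℝ) - b| := by
  rcases Nat.lt_or_ge a b with h' | h'
  · have : (a : ℝ) + 1 ≤ b := by exact_mod_cast h'
    rw [abs_sub_comm, abs_of_nonneg (by linarith)]; linarith
  · have hb : b < a := lt_of_le_of_ne h' (Ne.symm h)
    have : (b : ℝ) + 1 ≤ a := by exact_mod_cast hb
    rw [abs_of_nonneg (by linarith)]; linarith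

lemma far_helper {s : ℝ} (hs : 0 < s) (a b : ℕ) (e : ℝ) (hab : a ≠ b)
    (he : |e| ≤ 3*s/4) : 3*s/2 ≤ |4*s*(a : ℝ) + e - 4*s*(b : ℝ)| := by
  have h1 := nat_dist a b hab
  have h2 : 4*s ≤ |4*s*(a : ℝ) - 4*s*b| := by
    have h3 : 4*s*(a : ℝ) - 4*s*b = (4*s) * ((a:ℝ) - b) := by ring
    rw [h3, abs_mul, abs_of_pos (show (0:ℝ) < 4*s by linarith)]
    nlinarith
  have h4 := abs_add_le (4*s*(a : ℝ) + e - 4*s*(b : ℝ)) (-e)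
  rw [abs_neg] at h4
  have h5 : 4*s*(a : ℝ) + e - 4*s*(b : ℝ) + -e = 4*s*(a : ℝ) - 4*s*b := by ring
  rw [h5] at h4
  linarith

/-- Spot centers: agent `i`'s `j`-th spot. -/
def ctr (n : ℕ) (s : ℝ) (i j : ℕ) : Pt :=
  if i = n - 1 then
    (if j = n - 1 then ((0 : ℝ), 3*s/4) else (4*s*j, -(3*s/4)))
  else
    (if j = i then (4*s*i - 3*s/4, (0:ℝ))
     else if j = n - 1 then (4*s*i + 3*s/4, (0:ℝ)) else (4*s*j, (0:ℝ)))

/-- The site at which agent `i`'s `j`-th spot lives. -/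
def siteOf (n : ℕ) (i j : ℕ) : ℕ :=
  if i = n - 1 then (if j = n - 1 then 0 else j)
  else (if j = n - 1 then i else j)

lemma ctr_decomp (n : ℕ) (hn : 2 ≤ n) {s : ℝ} (hs : 0 < s) (i j : ℕ)
    (hi : i < n) (hj : j < n) :
    siteOf n i j < n - 1 ∧
    ∃ dx dy : ℝ, ctr n s i j = (4*s*(siteOf n i j : ℝ) + dx, dy) ∧
      |dx| ≤ 3*s/4 ∧ |dy| ≤ 3*s/4 ∧
      (dx ≠ 0 → i ≠ n - 1 ∧ siteOf n i j = i) ∧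
      (dy ≠ 0 → i = n - 1) := by
  have h34 : |(3*s/4 : ℝ)| ≤ 3*s/4 := by rw [abs_of_pos (by linarith)]
  have hm34 : |(-(3*s/4) : ℝ)| ≤ 3*s/4 := by rw [abs_neg, abs_of_pos (by linarith)]
  have h0 : |(0:ℝ)| ≤ 3*s/4 := by rw [abs_zero]; linarith
  by_cases h1 : i = n - 1
  · by_cases h2 : j = n - 1
    · simp only [ctr, siteOf, if_pos h1, if_pos h2]
      refine ⟨by omega, 0, 3*s/4, ?_, h0, h34, by simp, fun _ => h1⟩
      norm_num
    · simp only [ctr, siteOf, if_pos h1, if_neg h2]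
      refine ⟨by omega, 0, -(3*s/4), ?_, h0, hm34, by simp, fun _ => h1⟩
      norm_num
  · by_cases h2 : j = n - 1
    · have h4 : ¬ j = i := by omega
      simp only [ctr, siteOf, if_neg h1, if_pos h2, if_neg h4]
      refine ⟨by omega, 3*s/4, 0, ?_, h34, h0, fun _ => ⟨h1, by trivial⟩, by simp⟩
      norm_num
    · by_cases h4 : j = i
      · simp only [ctr, siteOf, if_neg h1, if_neg h2, if_pos h4]
        refine ⟨by omega, -(3*s/4), 0, ?_, hm34, h0, fun _ => ⟨h1, by omega⟩, by simp⟩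
        subst h4
        norm_num
        ring
      · simp only [ctr, siteOf, if_neg h1, if_neg h2, if_neg h4]
        refine ⟨by omega, 0, 0, ?_, h0, h0, by simp, by simp⟩
        norm_num

lemma ctr_far (n : ℕ) {s : ℝ} (hs : 0 < s) (i j j' : ℕ) (hjj' : j ≠ j') :
    3*s/2 ≤ |(ctr n s i j).1 - (ctr n s i j').1| ∨
    3*s/2 ≤ |(ctr n s i j).2 - (ctr n s i j').2| := by
  have hexact : 3*s/2 ≤ |(3*s/2 : ℝ)| := by rw [abs_of_pos (by linarith)]
  have h340 : |(-(3*s/4) : ℝ)| ≤ 3*s/4 := by rw [abs_neg, abs_of_pos (by linarith)]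
  have h34 : |(3*s/4 : ℝ)| ≤ 3*s/4 := by rw [abs_of_pos (by linarith)]
  have h00 : |(0 : ℝ)| ≤ 3*s/4 := by rw [abs_zero]; linarith
  by_cases h1 : i = n - 1
  · by_cases h2 : j = n - 1 <;> by_cases h3 : j' = n - 1
    · exact absurd (h2.trans h3.symm) hjj'
    · right
      simp only [ctr, if_pos h1, if_pos h2, if_neg h3]
      have : (3*s/4 : ℝ) - (-(3*s/4)) = 3*s/2 := by ring
      rw [this]; exact hexact
    · right
      simp only [ctr, if_pos h1, if_neg h2, if_pos h3]
      have : (-(3*s/4) : ℝ) - 3*s/4 = -(3*s/2) := by ring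
      rw [this, abs_neg]; exact hexact
    · left
      simp only [ctr, if_pos h1, if_neg h2, if_neg h3]
      have h := far_helper hs j j' 0 hjj' h00
      rw [add_zero] at h
      exact h
  · by_cases h2 : j = i <;> by_cases h3 : j' = i
    · exact absurd (h2.trans h3.symm) hjj'
    · by_cases h4 : j' = n - 1
      · -- A vs B
        left
        simp only [ctr, if_neg h1, if_pos h2, if_neg h3, if_pos h4]
        have : 4*s*(i:ℝ) - 3*s/4 - (4*s*i + 3*s/4) = -(3*s/2) := by ring
        rw [this, abs_neg]; exact hexact
      · -- A vs Z
        left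
        simp only [ctr, if_neg h1, if_pos h2, if_neg h3, if_neg h4]
        have h := far_helper hs i j' (-(3*s/4)) (fun h => h3 h.symm) h340
        have e : 4*s*(i:ℝ) + -(3*s/4) - 4*s*j' = 4*s*(i:ℝ) - 3*s/4 - 4*s*j' := by ring
        rw [e] at h
        linarith
    · by_cases h4 : j = n - 1
      · -- B vs A
        left
        simp only [ctr, if_neg h1, if_neg h2, if_pos h4, if_pos h3]
        have : 4*s*(i:ℝ) + 3*s/4 - (4*s*i - 3*s/4) = 3*s/2 := by ring
        rw [this]; exact hexact
      · -- Z vs A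
        left
        simp only [ctr, if_neg h1, if_neg h2, if_neg h4, if_pos h3]
        have h := far_helper hs i j (-(3*s/4)) (fun h => h2 h.symm) h340
        have e : 4*s*(i:ℝ) + -(3*s/4) - 4*s*j = -(4*s*(j:ℝ) - (4*s*i - 3*s/4)) := by ring
        rw [e, abs_neg] at h
        linarith
    · by_cases h4 : j = n - 1 <;> by_cases h5 : j' = n - 1
      · exact absurd (h4.trans h5.symm) hjj'
      · -- B vs Z
        left
        simp only [ctr, if_neg h1, if_neg h2, if_pos h4, if_neg h3, if_neg h5]
        have h := far_helper hs i j' (3*s/4) (fun h => h3 h.symm) h34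
        linarith
      · -- Z vs B
        left
        simp only [ctr, if_neg h1, if_neg h2, if_neg h4, if_neg h3, if_pos h5]
        have h := far_helper hs i j (3*s/4) (fun h => h2 h.symm) h34
        have e : 4*s*(i:ℝ) + 3*s/4 - 4*s*j = -(4*s*(j:ℝ) - (4*s*i + 3*s/4)) := by ring
        rw [e, abs_neg] at h
        linarith
      · -- Z vs Z
        left
        simp only [ctr, if_neg h1, if_neg h2, if_neg h4, if_neg h3, if_neg h5]
        have h := far_helper hs j j' 0 hjj' h00
        rw [add_zero] at h
        exact h

end IP
namespace IP

lemma sep_of_far {s : ℝ} (hs : 0 < s) {z z' : Pt}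
    (h : 3*s/2 ≤ |z.1 - z'.1| ∨ 3*s/2 ≤ |z.2 - z'.2|) :
    SepSets s (spotR s hs z).set (spotR s hs z').set := by
  intro p hp q hq
  rw [mem_spotR hs] at hp hq
  unfold linfDist
  rcases h with h | h
  · refine le_trans ?_ (le_max_left _ _)
    have t := tri3 z.1 p.1 q.1 z'.1
    rw [abs_sub_comm z.1 p.1] at t
    linarith [hp.1, hq.1]
  · refine le_trans ?_ (le_max_right _ _)
    have t := tri3 z.2 p.2 q.2 z'.2
    rw [abs_sub_comm z.2 p.2] at t
    linarith [hp.2, hq.2]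

lemma close_pts {s : ℝ} (hs : 0 < s) {z z' p q : Pt}
    (hx : |z.1 - z'.1| ≤ 3*s/4) (hy : |z.2 - z'.2| ≤ 3*s/4)
    (hp : p ∈ (spotR s hs z).set) (hq : q ∈ (spotR s hs z').set) :
    linfDist p q < s := by
  rw [mem_spotR hs] at hp hq
  unfold linfDist
  apply max_lt
  · have t := tri3 p.1 z.1 z'.1 q.1
    rw [abs_sub_comm z'.1 q.1] at t
    linarith [hp.1, hq.1]
  · have t := tri3 p.2 z.2 z'.2 q.2
    rw [abs_sub_comm z'.2 q.2] at t
    linarith [hp.2, hq.2]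

lemma sep_inter_empty {s : ℝ} (hs : 0 < s) {A B : Set Pt} (h : SepSets s A B) :
    A ∩ B = ∅ := by
  by_contra hne
  obtain ⟨p, hpA, hpB⟩ := Set.nonempty_iff_ne_empty.2 hne
  have := h p hpA p hpB
  simp [linfDist] at this
  linarith

lemma spot_measurable {s : ℝ} (hs : 0 < s) (z : Pt) :
    MeasurableSet (spotR s hs z).set :=
  measurableSet_Icc.prod measurableSet_Icc

lemma spot_volume {s : ℝ} (hs : 0 < s) (z : Pt) :
    volume (spotR s hs z).set = ENNReal.ofReal (s/8) * ENNReal.ofReal (s/8) := by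
  show volume (Set.Icc (z.1 - s/16) (z.1 + s/16) ×ˢ Set.Icc (z.2 - s/16) (z.2 + s/16)) = _
  rw [show (volume : Measure Pt) = (volume : Measure ℝ).prod volume from rfl]
  rw [MeasureTheory.Measure.prod_prod, Real.volume_Icc, Real.volume_Icc]
  congr 2 <;> ring

lemma val_indicator {S : Set Pt} (hS : MeasurableSet S) (Z : Set Pt) :
    val (S.indicator fun _ => (1:ℝ)) Z = (volume (Z ∩ S)).toReal := by
  unfold val
  rw [MeasureTheory.setIntegral_indicator hS, MeasureTheory.setIntegral_const]
  simp
  rfl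

end IP
set_option maxHeartbeats 1000000 in
/-- Impossibility of any multiplicative approximation of the maximin share
under separation. -/
theorem stmt0 (n : ℕ) (hn : 2 ≤ n) (s : ℝ) (hs : 0 < s) (r : ℝ) (hr : 0 < r) :
    ∃ (L : Set Pt) (f : Fin n → Pt → ℝ),
      (∃ x y w : ℝ, 0 < w ∧ L = Set.Icc x (x + w) ×ˢ Set.Icc y (y + w)) ∧
      (∀ i, Integrable (f i)) ∧
      (∀ i p, 0 ≤ f i p) ∧
      (∀ i p, p ∉ L → f i p = 0) ∧
      (∀ i, 0 < MMS (f i) L s n) ∧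
      ¬ ∃ A : Fin n → Rect,
          (∀ i, (A i).set ⊆ L) ∧
          (∀ i j, i ≠ j → SepSets s ((A i).set) ((A j).set)) ∧
          (∀ i, r * MMS (f i) L s n ≤ val (f i) ((A i).set)) := by
  have hn1 : (2:ℝ) ≤ (n:ℝ) := by exact_mod_cast hn
  set w : ℝ := 8*s*(n:ℝ) with hw
  have hwpos : 0 < w := by rw [hw]; nlinarith
  set L : Set Pt := Set.Icc (-(4*s*(n:ℝ))) (-(4*s*(n:ℝ)) + w) ×ˢ
      Set.Icc (-(4*s*(n:ℝ))) (-(4*s*(n:ℝ)) + w) with hL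
  have hLtop : -(4*s*(n:ℝ)) + w = 4*s*(n:ℝ) := by rw [hw]; ring
  set S : Fin n → Set Pt := fun i => ⋃ j : Fin n, (IP.spotR s hs (IP.ctr n s i j)).set with hSdef
  set f : Fin n → Pt → ℝ := fun i => (S i).indicator fun _ => (1:ℝ) with hf
  -- every spot is inside L
  have hspotL : ∀ (i j : ℕ), i < n → j < n → (IP.spotR s hs (IP.ctr n s i j)).set ⊆ L := by
    intro i j hi hj p hp
    obtain ⟨hsite, dx, dy, hc, hdx, hdy, -, -⟩ := IP.ctr_decomp n hn hs i j hi hj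
    have e1 : (IP.ctr n s i j).1 = 4*s*(IP.siteOf n i j : ℝ) + dx := congrArg Prod.fst hc
    have e2 : (IP.ctr n s i j).2 = dy := congrArg Prod.snd hc
    rw [IP.mem_spotR hs] at hp
    obtain ⟨hp1, hp2⟩ := hp
    rw [e1] at hp1
    rw [e2] at hp2
    rw [abs_le] at hp1 hp2 hdx hdy
    have hsite2 : (IP.siteOf n i j : ℝ) ≤ (n:ℝ) - 2 := by
      have h2 : IP.siteOf n i j + 2 ≤ n := by omega
      have h3 : ((IP.siteOf n i j + 2 : ℕ) : ℝ) ≤ (n:ℝ) := by exact_mod_cast h2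
      push_cast at h3
      linarith
    have hsite0 : (0:ℝ) ≤ (IP.siteOf n i j : ℝ) := Nat.cast_nonneg _
    have hprod : 4*s*(IP.siteOf n i j : ℝ) ≤ 4*s*((n:ℝ) - 2) :=
      mul_le_mul_of_nonneg_left hsite2 (by linarith : (0:ℝ) ≤ 4*s)
    have hprod0 : 0 ≤ 4*s*(IP.siteOf n i j : ℝ) := by positivity
    have h8s : 8*s ≤ 4*s*(n:ℝ) := by nlinarith
    rw [hL]
    refine Set.mem_prod.2 ⟨Set.mem_Icc.2 ⟨?_, ?_⟩, Set.mem_Icc.2 ⟨?_, ?_⟩⟩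
    · linarith [hp1.1, hdx.1]
    · rw [hLtop]; linarith [hp1.2, hdx.2]
    · linarith [hp2.1, hdy.1]
    · rw [hLtop]; linarith [hp2.2, hdy.2]
  have hSL : ∀ i : Fin n, S i ⊆ L := by
    intro i
    rw [hSdef]
    exact Set.iUnion_subset fun j => hspotL i j i.isLt j.isLt
  have hSmeas : ∀ i : Fin n, MeasurableSet (S i) := by
    intro i
    rw [hSdef]
    exact MeasurableSet.iUnion fun j => IP.spot_measurable hs _
  have hLvol : volume L < ⊤ := by
    rw [hL]
    rw [show (volume : Measure Pt) = (volume : Measure ℝ).prod volume from rfl,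
      MeasureTheory.Measure.prod_prod, Real.volume_Icc]
    exact ENNReal.mul_lt_top ENNReal.ofReal_lt_top ENNReal.ofReal_lt_top
  have hSvol : ∀ i : Fin n, volume (S i) ≠ ⊤ :=
    fun i => (lt_of_le_of_lt (measure_mono (hSL i)) hLvol).ne
  have hval : ∀ (i : Fin n) (Z : Set Pt), val (f i) Z = (volume (Z ∩ S i)).toReal := by
    intro i Z
    rw [hf]
    exact IP.val_indicator (hSmeas i) Z
  have hspotval : ∀ (i j : Fin n),
      val (f i) ((IP.spotR s hs (IP.ctr n s i j)).set) = (s/8)*(s/8) := by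
    intro i j
    rw [hval]
    have hsub : (IP.spotR s hs (IP.ctr n s i j)).set ⊆ S i := by
      rw [hSdef]
      exact Set.subset_iUnion (fun j : Fin n => (IP.spotR s hs (IP.ctr n s i j)).set) j
    rw [Set.inter_eq_self_of_subset_left hsub, IP.spot_volume hs,
      ← ENNReal.ofReal_mul (by linarith), ENNReal.toReal_ofReal (by positivity)]
  have hsep : ∀ (i j j' : Fin n), j ≠ j' →
      SepSets s ((IP.spotR s hs (IP.ctr n s i j)).set) ((IP.spotR s hs (IP.ctr n s i j')).set) := by
    intro i j j' hne
    exact IP.sep_of_far hs (IP.ctr_far n hs i j j' (fun h => hne (Fin.val_injective h)))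
  have hMMSge : ∀ i : Fin n, (s/8)*(s/8) ≤ MMS (f i) L s n := by
    intro i
    unfold MMS
    apply le_csSup
    · refine ⟨(volume (S i)).toReal, ?_⟩
      rintro t ⟨P, hP1, hP2, hP3, hP4⟩
      refine le_trans (hP4 ⟨0, by omega⟩) ?_
      rw [hval]
      exact ENNReal.toReal_mono (hSvol i) (measure_mono Set.inter_subset_right)
    · refine ⟨fun j => IP.spotR s hs (IP.ctr n s i j), fun j => hspotL i j i.isLt j.isLt,
        fun a b hab => ?_, hsep i, fun j => (hspotval i j).ge⟩
      rw [IP.sep_inter_empty hs (hsep i a b hab)]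
      exact measure_empty
  have hMMSpos : ∀ i : Fin n, 0 < MMS (f i) L s n :=
    fun i => lt_of_lt_of_le (by positivity) (hMMSge i)
  refine ⟨L, f, ⟨-(4*s*(n:ℝ)), -(4*s*(n:ℝ)), w, hwpos, rfl⟩, ?_, ?_, ?_, hMMSpos, ?_⟩
  · -- integrable
    intro i
    rw [hf]
    rw [MeasureTheory.integrable_indicator_iff (hSmeas i)]
    exact MeasureTheory.integrableOn_const
      ((lt_of_le_of_lt (measure_mono (hSL i)) hLvol).ne)
  · -- nonneg
    intro i p
    rw [hf]
    exact Set.indicator_nonneg (fun _ _ => zero_le_one) p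
  · -- vanishing outside L
    intro i p hp
    rw [hf]
    exact Set.indicator_of_notMem (fun hmem => hp (hSL i hmem)) _
  · -- impossibility
    rintro ⟨A, hAL, hAsep, hAval⟩
    have hcap : ∀ i : Fin n, ∃ (j : Fin n) (p : Pt),
        p ∈ (IP.spotR s hs (IP.ctr n s i j)).set ∧ p ∈ (A i).set := by
      intro i
      have hpos : 0 < val (f i) (A i).set :=
        lt_of_lt_of_le (mul_pos hr (hMMSpos i)) (hAval i)
      rw [hval] at hpos
      have hne : ((A i).set ∩ S i).Nonempty := by
        rw [Set.nonempty_iff_ne_empty]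
        intro hemp
        rw [hemp] at hpos
        simp at hpos
      obtain ⟨p, hpA, hpS⟩ := hne
      rw [hSdef] at hpS
      obtain ⟨j, hpU⟩ := Set.mem_iUnion.1 hpS
      exact ⟨j, p, hpU, hpA⟩
    choose jj pp hp1 hp2 using hcap
    have hsitelt : ∀ i : Fin n, IP.siteOf n i (jj i) < n - 1 :=
      fun i => (IP.ctr_decomp n hn hs i (jj i) i.isLt (jj i).isLt).1
    have hcard : Fintype.card (Fin (n-1)) < Fintype.card (Fin n) := by
      simp only [Fintype.card_fin]
      omega
    obtain ⟨i, i', hne, heq⟩ := Fintype.exists_ne_map_eq_of_card_lt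
      (fun i : Fin n => (⟨IP.siteOf n i (jj i), hsitelt i⟩ : Fin (n-1))) hcard
    have hsiteeq : IP.siteOf n i (jj i) = IP.siteOf n i' (jj i') := congrArg Fin.val heq
    have hvalne : (i : ℕ) ≠ (i' : ℕ) := fun h => hne (Fin.val_injective h)
    obtain ⟨-, dx, dy, hc, hdx, hdy, hhx, hhy⟩ :=
      IP.ctr_decomp n hn hs i (jj i) i.isLt (jj i).isLt
    obtain ⟨-, dx', dy', hc', hdx', hdy', hhx', hhy'⟩ :=
      IP.ctr_decomp n hn hs i' (jj i') i'.isLt (jj i').isLt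
    have e1 : (IP.ctr n s i (jj i)).1 = 4*s*(IP.siteOf n i (jj i) : ℝ) + dx :=
      congrArg Prod.fst hc
    have e2 : (IP.ctr n s i (jj i)).2 = dy := congrArg Prod.snd hc
    have e1' : (IP.ctr n s i' (jj i')).1 = 4*s*(IP.siteOf n i' (jj i') : ℝ) + dx' :=
      congrArg Prod.fst hc'
    have e2' : (IP.ctr n s i' (jj i')).2 = dy' := congrArg Prod.snd hc'
    have hX : |(IP.ctr n s i (jj i)).1 - (IP.ctr n s i' (jj i')).1| ≤ 3*s/4 := by
      rw [e1, e1', hsiteeq]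
      have e : 4*s*(IP.siteOf n i' (jj i') : ℝ) + dx -
          (4*s*(IP.siteOf n i' (jj i') : ℝ) + dx') = dx - dx' := by ring
      rw [e]
      by_cases h1 : dx = 0
      · rw [h1, zero_sub, abs_neg]; exact hdx'
      · by_cases h2 : dx' = 0
        · rw [h2, sub_zero]; exact hdx
        · exact absurd ((hhx h1).2.symm.trans (hsiteeq.trans (hhx' h2).2)) hvalne
    have hY : |(IP.ctr n s i (jj i)).2 - (IP.ctr n s i' (jj i')).2| ≤ 3*s/4 := by
      rw [e2, e2']
      by_cases h1 : dy = 0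
      · rw [h1, zero_sub, abs_neg]; exact hdy'
      · by_cases h2 : dy' = 0
        · rw [h2, sub_zero]; exact hdy
        · exact absurd ((hhy h1).trans (hhy' h2).symm) hvalne
    have hlt := IP.close_pts hs hX hY (hp1 i) (hp1 i')
    have hge := hAsep i i' hne (pp i) (hp2 i) (pp i') (hp2 i')
    linarith
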